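/- There exists a constant C > 0 such that for every real Hilbert space H, every three times continuously differentiable function w : ℝ → H, every t ∈ ℝ and every h > 0: ‖ (3 w(t + h) − 4 w(t) + w(t − h)) / (2h) − w'(t + h) ‖² ≤ C h³ ∫_{t−h}^{t+h} ‖w'''(s)‖² ds. -/

import Mathlib

open intervalIntegral MeasureTheory

/-- Elementary Cauchy–Schwarz for interval integrals of continuous functions. -/
lemma cs_integral {g : ℝ → ℝ} {a b : ℝ} (hab : a ≤ b) (hg : Continuous g) :
    (∫ s in a..b, g s) ^ 2 ≤ (b - a) * ∫ s in a..b, g s ^ 2 := by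
  set J := ∫ s in a..b, g s with hJ
  set K := ∫ s in a..b, g s ^ 2 with hK
  set L := b - a with hL
  have hgi : IntervalIntegrable g volume a b := hg.intervalIntegrable a b
  have hg2i : IntervalIntegrable (fun s => g s ^ 2) volume a b :=
    (hg.pow 2).intervalIntegrable a b
  have h0 : 0 ≤ ∫ s in a..b, (L * g s - J) ^ 2 :=
    intervalIntegral.integral_nonneg hab (fun s _ => sq_nonneg _)
  have hexp : ∫ s in a..b, (L * g s - J) ^ 2 = L ^ 2 * K - 2 * L * J * J + J ^ 2 * L := by
    have heq : (fun s => (L * g s - J) ^ 2)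
        = fun s => L ^ 2 * g s ^ 2 - (2 * L * J) * g s + J ^ 2 := by
      funext s; ring
    rw [heq]
    rw [intervalIntegral.integral_add ((hg2i.const_mul _).sub (hgi.const_mul _))
        (intervalIntegrable_const),
      intervalIntegral.integral_sub (hg2i.const_mul _) (hgi.const_mul _),
      intervalIntegral.integral_const_mul, intervalIntegral.integral_const_mul,
      intervalIntegral.integral_const]
    simp only [smul_eq_mul, ← hJ, ← hK, ← hL]
    ring
  rw [hexp] at h0
  rcases eq_or_lt_of_le hab with rfl | hab'
  · simp [hJ, hK]
  · have hL' : 0 < L := by rw [hL]; linarith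
    nlinarith [h0, hL', mul_pos hL' hL']

/-- Taylor's theorem with integral remainder, order 2, vector-valued. -/
lemma taylor3 {H : Type} [NormedAddCommGroup H] [NormedSpace ℝ H] [CompleteSpace H]
    {f : ℝ → H} (hf : ContDiff ℝ 3 f) (a b : ℝ) :
    f b = f a + (b - a) • deriv f a + ((b - a) ^ 2 / 2) • iteratedDeriv 2 f a
      + ∫ s in a..b, ((b - s) ^ 2 / 2) • iteratedDeriv 3 f s := by
  have hd0 : Differentiable ℝ f := hf.differentiable (by norm_num)
  have hd1 : Differentiable ℝ (iteratedDeriv 1 f) :=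
    hf.differentiable_iteratedDeriv 1 (by norm_num)
  have hd2 : Differentiable ℝ (iteratedDeriv 2 f) :=
    hf.differentiable_iteratedDeriv 2 (by norm_num)
  have hc3 : Continuous (iteratedDeriv 3 f) := hf.continuous_iteratedDeriv 3 (by norm_num)
  set P : ℝ → H := fun s =>
    f s + (b - s) • iteratedDeriv 1 f s + ((b - s) ^ 2 / 2) • iteratedDeriv 2 f s with hP
  have hder : ∀ s : ℝ, HasDerivAt P (((b - s) ^ 2 / 2) • iteratedDeriv 3 f s) s := by
    intro s
    have h0 : HasDerivAt f (iteratedDeriv 1 f s) s := by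
      rw [iteratedDeriv_one]; exact (hd0 s).hasDerivAt
    have h1 : HasDerivAt (iteratedDeriv 1 f) (iteratedDeriv 2 f s) s := by
      have e : iteratedDeriv 2 f = deriv (iteratedDeriv 1 f) := iteratedDeriv_succ
      rw [e]; exact (hd1 s).hasDerivAt
    have h2 : HasDerivAt (iteratedDeriv 2 f) (iteratedDeriv 3 f s) s := by
      have e : iteratedDeriv 3 f = deriv (iteratedDeriv 2 f) := iteratedDeriv_succ
      rw [e]; exact (hd2 s).hasDerivAt
    have hc1 : HasDerivAt (fun y : ℝ => b - y) (-1) s := by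
      simpa using (hasDerivAt_id s).const_sub b
    have hc2 : HasDerivAt (fun y : ℝ => (b - y) ^ 2 / 2) (-(b - s)) s := by
      have := ((hc1.pow 2).div_const 2)
      exact this.congr_deriv (by simp only [Nat.cast_ofNat]; ring)
    have hA : HasDerivAt (fun y => (b - y) • iteratedDeriv 1 f y)
        ((b - s) • iteratedDeriv 2 f s + (-1 : ℝ) • iteratedDeriv 1 f s) s := hc1.smul h1
    have hB : HasDerivAt (fun y => ((b - y) ^ 2 / 2) • iteratedDeriv 2 f y)
        (((b - s) ^ 2 / 2) • iteratedDeriv 3 f s + (-(b - s)) • iteratedDeriv 2 f s) s :=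
      hc2.smul h2
    have := (h0.add hA).add hB
    exact this.congr_deriv (by module)
  have hcont : Continuous fun s => ((b - s) ^ 2 / 2) • iteratedDeriv 3 f s := by
    exact (((continuous_const.sub continuous_id).pow 2).div_const 2).smul hc3
  have hFTC : ∫ s in a..b, ((b - s) ^ 2 / 2) • iteratedDeriv 3 f s = P b - P a :=
    intervalIntegral.integral_eq_sub_of_hasDerivAt (fun s _ => hder s)
      (hcont.intervalIntegrable a b)
  have hPb : P b = f b := by simp [hP]
  rw [hFTC, hPb, hP]
  simp only [iteratedDeriv_one]
  abel

theorem bdf2_quotient_bound :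
    ∃ C : ℝ, 0 < C ∧
      ∀ (H : Type) (_ : NormedAddCommGroup H) (_ : InnerProductSpace ℝ H)
        (_ : CompleteSpace H)
        (w : ℝ → H), ContDiff ℝ 3 w →
        ∀ (t : ℝ) (h : ℝ), 0 < h →
          ‖(2 * h)⁻¹ • ((3 : ℝ) • w (t + h) - (4 : ℝ) • w t + w (t - h)) -
              deriv w (t + h)‖ ^ 2 ≤
            C * h ^ 3 * ∫ s in (t - h)..(t + h), ‖iteratedDeriv 3 w s‖ ^ 2 := by
  refine ⟨8, by norm_num, ?_⟩
  intro H _ _ _ w hw t h hh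
  set f3 := iteratedDeriv 3 w with hf3
  have hc3 : Continuous f3 := hw.continuous_iteratedDeriv 3 (by norm_num)
  have E1 := taylor3 hw (t + h) t
  have E2 := taylor3 hw (t + h) (t - h)
  set R1 := ∫ s in (t + h)..t, ((t - s) ^ 2 / 2) • f3 s with hR1
  set R2 := ∫ s in (t + h)..(t - h), ((t - h - s) ^ 2 / 2) • f3 s with hR2
  set J := ∫ s in (t - h)..(t + h), ‖f3 s‖ with hJdef
  have hJ0 : 0 ≤ J := intervalIntegral.integral_nonneg (by linarith) (fun s _ => norm_nonneg _)
  have hcont1 : Continuous fun s : ℝ => ((t - s) ^ 2 / 2) • f3 s := by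
    apply Continuous.smul _ hc3
    fun_prop
  have hcont2 : Continuous fun s : ℝ => ((t - h - s) ^ 2 / 2) • f3 s := by
    apply Continuous.smul _ hc3
    fun_prop
  have hcontc : ∀ c : ℝ, Continuous fun s : ℝ => c * ‖f3 s‖ := fun c =>
    continuous_const.mul hc3.norm
  -- key identity
  have hkey : (3 : ℝ) • w (t + h) - (4 : ℝ) • w t + w (t - h)
      = (2 * h) • deriv w (t + h) - (4 : ℝ) • R1 + R2 := by
    rw [E1, E2]
    have h1 : t - (t + h) = -h := by ring
    have h2 : t - h - (t + h) = -(2 * h) := by ring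
    rw [h1, h2]
    module
  have hh2 : (2 * h) ≠ 0 := by positivity
  have hE : (2 * h)⁻¹ • ((3 : ℝ) • w (t + h) - (4 : ℝ) • w t + w (t - h)) - deriv w (t + h)
      = (2 * h)⁻¹ • (R2 - (4 : ℝ) • R1) := by
    rw [hkey, smul_add, smul_sub, smul_smul, inv_mul_cancel₀ hh2, one_smul]
    module
  -- bound ‖R1‖
  have hbR1 : ‖R1‖ ≤ (h ^ 2 / 2) * J := by
    have hsym : ‖R1‖ = ‖∫ s in t..(t + h), ((t - s) ^ 2 / 2) • f3 s‖ := by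
      rw [hR1, intervalIntegral.integral_symm, norm_neg]
    have hle : t ≤ t + h := by linarith
    rw [hsym]
    calc ‖∫ s in t..(t + h), ((t - s) ^ 2 / 2) • f3 s‖
        ≤ ∫ s in t..(t + h), ‖((t - s) ^ 2 / 2) • f3 s‖ :=
          intervalIntegral.norm_integral_le_integral_norm hle
      _ ≤ ∫ s in t..(t + h), (h ^ 2 / 2) * ‖f3 s‖ := by
          refine intervalIntegral.integral_mono_on hle
            (hcont1.norm.intervalIntegrable _ _) ((hcontc _).intervalIntegrable _ _) ?_
          intro s hs
          rw [norm_smul, Real.norm_eq_abs]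
          have hs1 : t ≤ s := hs.1
          have hs2 : s ≤ t + h := hs.2
          have hb : |(t - s) ^ 2 / 2| ≤ h ^ 2 / 2 := by
            rw [abs_of_nonneg (by positivity)]
            nlinarith
          exact mul_le_mul_of_nonneg_right hb (norm_nonneg _)
      _ ≤ ∫ s in (t - h)..(t + h), (h ^ 2 / 2) * ‖f3 s‖ :=
          intervalIntegral.integral_mono_interval (by linarith) hle le_rfl
            (Filter.Eventually.of_forall fun s => by positivity)
            ((hcontc _).intervalIntegrable _ _)
      _ = (h ^ 2 / 2) * J := by rw [hJdef, intervalIntegral.integral_const_mul]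
  -- bound ‖R2‖
  have hbR2 : ‖R2‖ ≤ (2 * h ^ 2) * J := by
    have hsym : ‖R2‖ = ‖∫ s in (t - h)..(t + h), ((t - h - s) ^ 2 / 2) • f3 s‖ := by
      rw [hR2, intervalIntegral.integral_symm, norm_neg]
    have hle : t - h ≤ t + h := by linarith
    rw [hsym]
    calc ‖∫ s in (t - h)..(t + h), ((t - h - s) ^ 2 / 2) • f3 s‖
        ≤ ∫ s in (t - h)..(t + h), ‖((t - h - s) ^ 2 / 2) • f3 s‖ :=
          intervalIntegral.norm_integral_le_integral_norm hle
      _ ≤ ∫ s in (t - h)..(t + h), (2 * h ^ 2) * ‖f3 s‖ := by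
          refine intervalIntegral.integral_mono_on hle
            (hcont2.norm.intervalIntegrable _ _) ((hcontc _).intervalIntegrable _ _) ?_
          intro s hs
          rw [norm_smul, Real.norm_eq_abs]
          have hs1 : t - h ≤ s := hs.1
          have hs2 : s ≤ t + h := hs.2
          have hb : |(t - h - s) ^ 2 / 2| ≤ 2 * h ^ 2 := by
            rw [abs_of_nonneg (by positivity)]
            nlinarith
          exact mul_le_mul_of_nonneg_right hb (norm_nonneg _)
      _ = (2 * h ^ 2) * J := by rw [hJdef, intervalIntegral.integral_const_mul]
  -- combine
  have hnormE : ‖(2 * h)⁻¹ • ((3 : ℝ) • w (t + h) - (4 : ℝ) • w t + w (t - h)) -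
      deriv w (t + h)‖ ≤ 2 * h * J := by
    rw [hE, norm_smul, Real.norm_eq_abs, abs_of_nonneg (by positivity)]
    have htr : ‖R2 - (4 : ℝ) • R1‖ ≤ ‖R2‖ + 4 * ‖R1‖ := by
      calc ‖R2 - (4 : ℝ) • R1‖ ≤ ‖R2‖ + ‖(4 : ℝ) • R1‖ := norm_sub_le _ _
        _ = ‖R2‖ + 4 * ‖R1‖ := by rw [norm_smul]; norm_num
    calc (2 * h)⁻¹ * ‖R2 - (4 : ℝ) • R1‖
        ≤ (2 * h)⁻¹ * ((2 * h ^ 2) * J + 4 * ((h ^ 2 / 2) * J)) := by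
          refine mul_le_mul_of_nonneg_left ?_ (by positivity)
          have h4 := mul_le_mul_of_nonneg_left hbR1 (by norm_num : (0:ℝ) ≤ 4)
          linarith
      _ = 2 * h * J := by field_simp; ring
  -- Cauchy-Schwarz
  have hCS : J ^ 2 ≤ (2 * h) * ∫ s in (t - h)..(t + h), ‖f3 s‖ ^ 2 := by
    have hcs := cs_integral (g := fun s => ‖f3 s‖) (a := t - h) (b := t + h)
      (by linarith) hc3.norm
    simpa [← hJdef, show t + h - (t - h) = 2 * h by ring] using hcs
  have hsq : ‖(2 * h)⁻¹ • ((3 : ℝ) • w (t + h) - (4 : ℝ) • w t + w (t - h)) -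
      deriv w (t + h)‖ ^ 2 ≤ (2 * h * J) ^ 2 := by
    nlinarith [norm_nonneg ((2 * h)⁻¹ • ((3 : ℝ) • w (t + h) - (4 : ℝ) • w t + w (t - h)) -
      deriv w (t + h)), hnormE]
  calc ‖(2 * h)⁻¹ • ((3 : ℝ) • w (t + h) - (4 : ℝ) • w t + w (t - h)) - deriv w (t + h)‖ ^ 2
      ≤ (2 * h * J) ^ 2 := hsq
    _ = 4 * h ^ 2 * J ^ 2 := by ring
    _ ≤ 4 * h ^ 2 * ((2 * h) * ∫ s in (t - h)..(t + h), ‖f3 s‖ ^ 2) :=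
        mul_le_mul_of_nonneg_left hCS (by positivity)
    _ = 8 * h ^ 3 * ∫ s in (t - h)..(t + h), ‖f3 s‖ ^ 2 := by ring
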